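/- Fix an integer d ≥ 1 and reals γ > 0, φ > 0, k > 0, and let ℓ* be the least ℓ ∈ ℕ with φ·2^{(d+γ)(ℓ−1)} ≥ k. Let a : ℕ → ℝ satisfy 0 ≤ a_ℓ ≤ a_{ℓ+1} and 2·a_{ℓ+1} ≤ 2^γ·a_ℓ for all ℓ ∈ ℕ. Define α̂ = 2^{d·ℓ*}·a_{ℓ*}/2 and β̂ = 2^{d}·a_{ℓ*}/(2·φ·2^{γ(ℓ*−1)}). Then (i) for every ℓ ∈ ℕ, 2^{−ℓd}·α̂ + φ·2^{γ(ℓ−1)}·2^{−d}·β̂ ≥ a_ℓ, and (ii) α̂ + k·β̂ ≤ 2^{d·ℓ*}·a_{ℓ*}. -/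

import Mathlib

/-- The explicit dual pair `(α̂, β̂)` from the LP-bound lemma is dual-feasible, and its
dual objective value is at most `2^{d ℓ*} a_{ℓ*}`. -/
theorem stmt_3 (d : ℕ) (hd : 1 ≤ d) (γ φ k : ℝ) (hγ : 0 < γ) (hφ : 0 < φ) (hk : 0 < k)
    (ℓstar : ℕ)
    (hstar : IsLeast {ℓ : ℕ | k ≤ φ * (2 : ℝ) ^ (((d : ℝ) + γ) * ((ℓ : ℝ) - 1))} ℓstar)
    (a : ℕ → ℝ)
    (ha0 : ∀ ℓ, 0 ≤ a ℓ)
    (hamono : ∀ ℓ, a ℓ ≤ a (ℓ + 1))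
    (haratio : ∀ ℓ : ℕ, 2 * a (ℓ + 1) ≤ (2 : ℝ) ^ γ * a ℓ) :
    (∀ ℓ : ℕ,
      a ℓ ≤ (2 : ℝ) ^ (-((ℓ : ℝ) * (d : ℝ))) * ((2 : ℝ) ^ (d * ℓstar) * a ℓstar / 2)
        + φ * (2 : ℝ) ^ (γ * ((ℓ : ℝ) - 1)) * (2 : ℝ) ^ (-(d : ℝ)) *
          ((2 : ℝ) ^ d * a ℓstar / (2 * (φ * (2 : ℝ) ^ (γ * ((ℓstar : ℝ) - 1)))))) ∧
    (2 : ℝ) ^ (d * ℓstar) * a ℓstar / 2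
      + k * ((2 : ℝ) ^ d * a ℓstar / (2 * (φ * (2 : ℝ) ^ (γ * ((ℓstar : ℝ) - 1)))))
      ≤ (2 : ℝ) ^ (d * ℓstar) * a ℓstar := by
  have h2 : (0:ℝ) < 2 := two_pos
  set A := a ℓstar with hA
  have hA0 : 0 ≤ A := ha0 ℓstar
  set D : ℝ := (d : ℝ) with hD
  set S : ℝ := (ℓstar : ℝ) with hS
  have hD1 : (1:ℝ) ≤ D := by rw [hD]; exact_mod_cast hd
  have hmono : Monotone a := monotone_nat_of_le_succ hamono
  have hgpos : (0:ℝ) < (2:ℝ) ^ γ := Real.rpow_pos_of_pos h2 γ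
  -- ratio iteration
  have hrat : ∀ n : ℕ, a (ℓstar + n) ≤ ((2:ℝ) ^ γ / 2) ^ n * A := by
    intro n
    induction n with
    | zero => simp [hA]
    | succ m ih =>
      have := haratio (ℓstar + m)
      have h1 : a (ℓstar + (m+1)) ≤ (2:ℝ) ^ γ / 2 * a (ℓstar + m) := by
        have : a (ℓstar + m + 1) ≤ (2:ℝ) ^ γ * a (ℓstar + m) / 2 := by linarith
        rw [show ℓstar + (m+1) = ℓstar + m + 1 by ring]
        linarith
      calc a (ℓstar + (m+1)) ≤ (2:ℝ) ^ γ / 2 * a (ℓstar + m) := h1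
        _ ≤ (2:ℝ) ^ γ / 2 * (((2:ℝ) ^ γ / 2) ^ m * A) := by
            apply mul_le_mul_of_nonneg_left ih (by positivity)
        _ = ((2:ℝ) ^ γ / 2) ^ (m+1) * A := by ring
  -- key inequality
  have key : ∀ ℓ : ℕ, a ℓ ≤ (2:ℝ) ^ (D * (S - (ℓ:ℝ))) * A / 2
      + (2:ℝ) ^ (γ * ((ℓ:ℝ) - S)) * A / 2 := by
    intro ℓ
    rcases lt_trichotomy ℓ ℓstar with hlt | heq | hgt
    · -- ℓ < ℓstar
      have hterm2 : (0:ℝ) ≤ (2:ℝ) ^ (γ * ((ℓ:ℝ) - S)) * A / 2 := by positivity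
      have hSL : (1:ℝ) ≤ S - (ℓ:ℝ) := by
        have : ((ℓ+1:ℕ):ℝ) ≤ S := by rw [hS]; exact_mod_cast hlt
        push_cast at this
        linarith
      have hexp : (1:ℝ) ≤ D * (S - (ℓ:ℝ)) := by nlinarith
      have h2le : (2:ℝ) ≤ (2:ℝ) ^ (D * (S - (ℓ:ℝ))) := by
        calc (2:ℝ) = (2:ℝ) ^ (1:ℝ) := (Real.rpow_one 2).symm
          _ ≤ (2:ℝ) ^ (D * (S - (ℓ:ℝ))) :=
            Real.rpow_le_rpow_of_exponent_le one_le_two hexp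
      have : a ℓ ≤ A := hmono hlt.le
      nlinarith
    · subst heq
      simp [hS, hA]
    · -- ℓ > ℓstar
      obtain ⟨n, rfl⟩ : ∃ n, ℓ = ℓstar + n := ⟨ℓ - ℓstar, by omega⟩
      have hn1 : 1 ≤ n := by omega
      have hterm1 : (0:ℝ) ≤ (2:ℝ) ^ (D * (S - ((ℓstar + n : ℕ):ℝ))) * A / 2 := by positivity
      have h1 : a (ℓstar + n) ≤ ((2:ℝ) ^ γ / 2) ^ n * A := hrat n
      have h2n : (2:ℝ) ≤ (2:ℝ) ^ n := by
        calc (2:ℝ) = (2:ℝ) ^ (1:ℕ) := by norm_num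
          _ ≤ (2:ℝ) ^ n := pow_le_pow_right₀ one_le_two hn1
      have hpow : ((2:ℝ) ^ γ / 2) ^ n = (2:ℝ) ^ (γ * (n:ℝ)) / (2:ℝ) ^ n := by
        rw [div_pow, ← Real.rpow_natCast ((2:ℝ) ^ γ) n, ← Real.rpow_mul h2.le]
      have hle : ((2:ℝ) ^ γ / 2) ^ n ≤ (2:ℝ) ^ (γ * (n:ℝ)) / 2 := by
        rw [hpow]
        apply div_le_div_of_nonneg_left (by positivity) h2 h2n
      have hexp : γ * (n:ℝ) = γ * (((ℓstar + n : ℕ):ℝ) - S) := by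
        push_cast; ring
      calc a (ℓstar + n) ≤ ((2:ℝ) ^ γ / 2) ^ n * A := h1
        _ ≤ (2:ℝ) ^ (γ * (n:ℝ)) / 2 * A := mul_le_mul_of_nonneg_right hle hA0
        _ = (2:ℝ) ^ (γ * (((ℓstar + n : ℕ):ℝ) - S)) * A / 2 := by rw [hexp]; ring
        _ ≤ _ := by linarith
  have hφg : (0:ℝ) < φ * (2:ℝ) ^ (γ * (S - 1)) := by positivity
  constructor
  · intro ℓ
    have eq1 : (2 : ℝ) ^ (-((ℓ : ℝ) * D)) * ((2 : ℝ) ^ (d * ℓstar) * A / 2)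
        = (2:ℝ) ^ (D * (S - (ℓ:ℝ))) * A / 2 := by
      rw [← Real.rpow_natCast 2 (d * ℓstar)]
      rw [show (D * (S - (ℓ:ℝ))) = -((ℓ:ℝ) * D) + ((d * ℓstar : ℕ) : ℝ) by push_cast; ring,
        Real.rpow_add h2]
      ring
    have eq2 : φ * (2 : ℝ) ^ (γ * ((ℓ : ℝ) - 1)) * (2 : ℝ) ^ (-D) *
          ((2 : ℝ) ^ d * A / (2 * (φ * (2 : ℝ) ^ (γ * (S - 1)))))
        = (2:ℝ) ^ (γ * ((ℓ:ℝ) - S)) * A / 2 := by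
      rw [← Real.rpow_natCast 2 d,
        show γ * ((ℓ:ℝ) - S) = γ * ((ℓ:ℝ) - 1) + (-D) + (D) + (-(γ * (S - 1))) by
          push_cast; ring,
        Real.rpow_add h2, Real.rpow_add h2, Real.rpow_add h2, Real.rpow_neg h2.le (γ * (S-1))]
      field_simp
      ring
    rw [eq1, eq2]
    exact key ℓ
  · -- objective bound
    have hk2 : k ≤ φ * (2:ℝ) ^ ((D + γ) * (S - 1)) := hstar.1
    have hβ0 : (0:ℝ) ≤ (2 : ℝ) ^ d * A / (2 * (φ * (2 : ℝ) ^ (γ * (S - 1)))) := by positivity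
    have hstep : k * ((2 : ℝ) ^ d * A / (2 * (φ * (2 : ℝ) ^ (γ * (S - 1)))))
        ≤ (2:ℝ) ^ (d * ℓstar) * A / 2 := by
      calc k * ((2 : ℝ) ^ d * A / (2 * (φ * (2 : ℝ) ^ (γ * (S - 1)))))
          ≤ (φ * (2:ℝ) ^ ((D + γ) * (S - 1))) *
            ((2 : ℝ) ^ d * A / (2 * (φ * (2 : ℝ) ^ (γ * (S - 1))))) :=
            mul_le_mul_of_nonneg_right hk2 hβ0
        _ = (2:ℝ) ^ (d * ℓstar) * A / 2 := by
            rw [← Real.rpow_natCast 2 (d * ℓstar), ← Real.rpow_natCast 2 d,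
              show ((d * ℓstar : ℕ) : ℝ) = (D + γ) * (S - 1) + (d:ℝ) + (-(γ * (S - 1))) by
                push_cast; ring,
              Real.rpow_add h2, Real.rpow_add h2, Real.rpow_neg h2.le (γ * (S-1))]
            field_simp
    linarith
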